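/- Let G be a weighted directed graph on vertex set {1,…,N} with Laplacian L, suppose G has a rooted-out branch, and let k_u > 0. Let w : [0,∞) → ℝ^{3N} be a continuous perturbation satisfying ‖w(t)‖ ≤ k_w e^{−λ_w t} ‖w(0)‖ for all t ≥ 0, for some constants k_w, λ_w > 0. If e : [0,∞) → ℝ^{3N} is differentiable and satisfies ė(t) = −k_u (L ⊗ I_3) e(t) + w(t), then there exist a point e* in the consensus set E = {x ∈ ℝ^{3N} : x_1 = ⋯ = x_N, x_i ∈ ℝ³} and constants c > 0 and λ > 0 such that ‖e(t) − e*‖ ≤ c e^{−λ t} for all t ≥ 0. -/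

import Mathlib

open scoped Kronecker

/-- The Laplacian of the weighted directed graph on `Fin N` with weights `a`. -/
def graphLaplacian {N : ℕ} (a : Fin N → Fin N → ℝ) : Matrix (Fin N) (Fin N) ℝ :=
  Matrix.of fun i j => if i = j then ∑ k ∈ Finset.univ.erase i, a i k else -(a i j)

/-- `G` has a rooted-out branch: some vertex has a directed path to every other vertex
(information flows from `j` to `i` along an edge when `a i j > 0`). -/
def hasRootedOutBranch {N : ℕ} (a : Fin N → Fin N → ℝ) : Prop :=
  ∃ r : Fin N, ∀ v : Fin N, Relation.ReflTransGen (fun u v => 0 < a v u) r v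

/-- The Euclidean norm on `ℝ^m`. -/
noncomputable def enorm {m : Type*} [Fintype m] (v : m → ℝ) : ℝ :=
  Real.sqrt (∑ i, v i ^ 2)

/-! ### Auxiliary material -/

open NormedSpace

set_option linter.unusedSectionVars false

attribute [local instance] Matrix.linftyOpNormedAddCommGroup Matrix.linftyOpNormedRing
  Matrix.linftyOpNormedAlgebra

section MatrixExpFacts

variable {n : Type*} [Fintype n] [DecidableEq n]

noncomputable def entryCLM (i j : n) : Matrix n n ℝ →L[ℝ] ℝ :=
  LinearMap.toContinuousLinearMap
    { toFun := fun A => A i j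
      map_add' := fun _ _ => rfl
      map_smul' := fun _ _ => rfl }

lemma exp_entry_summable (A : Matrix n n ℝ) (i j : n) :
    Summable (fun m : ℕ => ((Nat.factorial m) : ℝ)⁻¹ * (A ^ m) i j) := by
  have := (NormedSpace.expSeries_summable' (𝕂 := ℝ) A).map
    (entryCLM i j).toLinearMap (entryCLM i j).continuous
  exact this

lemma exp_entry (A : Matrix n n ℝ) (i j : n) :
    NormedSpace.exp A i j = ∑' m : ℕ, ((Nat.factorial m) : ℝ)⁻¹ * (A ^ m) i j := by
  rw [exp_eq_tsum ℝ]
  have := (entryCLM i j).map_tsum (NormedSpace.expSeries_summable' (𝕂 := ℝ) A)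
  exact this

lemma pow_entry_nonneg {A : Matrix n n ℝ} (hA : ∀ i j, 0 ≤ A i j) (m : ℕ) :
    ∀ i j, 0 ≤ (A ^ m) i j := by
  induction m with
  | zero => intro i j; simp [Matrix.one_apply]; positivity
  | succ m ih =>
    intro i j
    rw [pow_succ, Matrix.mul_apply]
    exact Finset.sum_nonneg fun k _ => mul_nonneg (ih i k) (hA k j)

lemma exp_entry_nonneg {A : Matrix n n ℝ} (hA : ∀ i j, 0 ≤ A i j) (i j : n) :
    0 ≤ NormedSpace.exp A i j := by
  rw [exp_entry]
  exact tsum_nonneg fun m => mul_nonneg (by positivity) (pow_entry_nonneg hA m i j)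

lemma exp_entry_pos {A : Matrix n n ℝ} (hA : ∀ i j, 0 ≤ A i j) {i j : n} {m : ℕ}
    (hm : 0 < (A ^ m) i j) : 0 < NormedSpace.exp A i j := by
  rw [exp_entry]
  have hterm : 0 < ((Nat.factorial m) : ℝ)⁻¹ * (A ^ m) i j := by
    have : (0:ℝ) < ((Nat.factorial m) : ℝ)⁻¹ := by positivity
    exact mul_pos this hm
  refine lt_of_lt_of_le hterm ?_
  exact Summable.le_tsum (exp_entry_summable A i j) m
    (fun b _ => mul_nonneg (by positivity) (pow_entry_nonneg hA b i j))

noncomputable def mulVecCLM (v : n → ℝ) : Matrix n n ℝ →L[ℝ] (n → ℝ) :=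
  LinearMap.toContinuousLinearMap
    { toFun := fun A => A.mulVec v
      map_add' := fun A B => Matrix.add_mulVec A B v
      map_smul' := fun c A => by simp [Matrix.smul_mulVec] }

lemma exp_mulVec_of_mulVec_eq_zero {A : Matrix n n ℝ} {v : n → ℝ} (h : A.mulVec v = 0) :
    (NormedSpace.exp A).mulVec v = v := by
  have hmap := (mulVecCLM v).map_tsum (NormedSpace.expSeries_summable' (𝕂 := ℝ) A)
  rw [exp_eq_tsum ℝ]
  rw [show (∑' m : ℕ, ((Nat.factorial m) : ℝ)⁻¹ • A ^ m).mulVec v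
      = mulVecCLM v (∑' m : ℕ, ((Nat.factorial m) : ℝ)⁻¹ • A ^ m) from rfl, hmap]
  have hterm : ∀ m : ℕ, mulVecCLM v (((Nat.factorial m) : ℝ)⁻¹ • A ^ m)
      = if m = 0 then v else 0 := by
    intro m
    cases m with
    | zero => simp [mulVecCLM]
    | succ m =>
      have : (A ^ (m+1)).mulVec v = 0 := by
        rw [pow_succ, ← Matrix.mulVec_mulVec, h, Matrix.mulVec_zero]
      simp [mulVecCLM, Matrix.smul_mulVec, this]
  calc (∑' m : ℕ, mulVecCLM v (((Nat.factorial m) : ℝ)⁻¹ • A ^ m))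
      = ∑' m : ℕ, (if m = 0 then v else 0) := by rw [tsum_congr hterm]
    _ = v := by rw [tsum_eq_single 0 (fun b hb => by simp [hb])]; simp

/-- decomposition: if `A = B - d • 1` then `exp A = e^{-d} • exp B`. -/
lemma exp_eq_of_sub_smul_one {A B : Matrix n n ℝ} {d : ℝ} (hAB : A = B - d • 1) :
    NormedSpace.exp A = Real.exp (-d) • NormedSpace.exp B := by
  have hc : Commute B ((-d) • (1 : Matrix n n ℝ)) := by
    simpa using (Commute.one_right B).smul_right (-d)
  have : A = B + (-d) • 1 := by rw [hAB, neg_smul, sub_eq_add_neg]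
  rw [this, Matrix.exp_add_of_commute B ((-d) • (1 : Matrix n n ℝ)) hc]
  have h1 : NormedSpace.exp ((-d) • (1 : Matrix n n ℝ)) = Real.exp (-d) • 1 := by
    have h2 : (-d) • (1 : Matrix n n ℝ) = Matrix.diagonal (fun _ => -d) := by
      ext i j
      by_cases h : i = j <;> simp [h, Matrix.diagonal_apply, Matrix.one_apply]
    rw [h2, Matrix.exp_diagonal]
    ext i j
    by_cases h : i = j <;>
      simp [h, Matrix.diagonal_apply, Matrix.one_apply, Pi.exp_def, Real.exp_eq_exp_ℝ]
  rw [h1, mul_smul_comm, mul_one]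

lemma exp_smul_add' (A : Matrix n n ℝ) (s t : ℝ) :
    NormedSpace.exp (s • A) * NormedSpace.exp (t • A) = NormedSpace.exp ((s + t) • A) := by
  rw [add_smul, Matrix.exp_add_of_commute (s • A) (t • A)
    (((Commute.refl A).smul_left s).smul_right t)]

/-- `A ↦ A.mulVec` as a continuous linear map into CLMs. -/
noncomputable def toCLM : Matrix n n ℝ →L[ℝ] ((n → ℝ) →L[ℝ] (n → ℝ)) :=
  LinearMap.toContinuousLinearMap
    { toFun := fun A => LinearMap.toContinuousLinearMap A.mulVecLin
      map_add' := fun A B => by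
        ext v i
        simp [Matrix.add_mulVec]
      map_smul' := fun c A => by
        ext v i
        simp [Matrix.smul_mulVec] }

@[simp] lemma toCLM_apply (A : Matrix n n ℝ) (v : n → ℝ) : toCLM A v = A.mulVec v := rfl

lemma exp_smul_continuous (M : Matrix n n ℝ) :
    Continuous fun s : ℝ => NormedSpace.exp (s • M) :=
  continuous_iff_continuousAt.2 fun s => (hasDerivAt_exp_smul_const M s).continuousAt

lemma voc (M : Matrix n n ℝ) (w e : ℝ → n → ℝ) (hw : Continuous w)
    (hode : ∀ t : ℝ, 0 ≤ t → HasDerivAt e (-(M.mulVec (e t)) + w t) t)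
    (t : ℝ) (ht : 0 ≤ t) :
    e t = (NormedSpace.exp ((-t) • M)).mulVec (e 0)
      + ∫ s in (0:ℝ)..t, (NormedSpace.exp ((-(t-s)) • M)).mulVec (w s) := by
  have hQd : ∀ s : ℝ, HasDerivAt (fun u : ℝ => NormedSpace.exp (u • M)) (NormedSpace.exp (s • M) * M) s :=
    fun s => hasDerivAt_exp_smul_const M s
  have hQcont := exp_smul_continuous M
  set g : ℝ → n → ℝ := fun s => (NormedSpace.exp (s • M)).mulVec (e s) with hg_def
  have hg : ∀ s : ℝ, 0 ≤ s → HasDerivAt g ((NormedSpace.exp (s • M)).mulVec (w s)) s := by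
    intro s hs
    have hF : HasDerivAt (fun u : ℝ => toCLM (NormedSpace.exp (u • M))) (toCLM (NormedSpace.exp (s • M) * M)) s := by
      exact toCLM.hasFDerivAt.comp_hasDerivAt s (hQd s)
    have := hF.clm_apply (hode s hs)
    have heq : toCLM (NormedSpace.exp (s • M) * M) (e s)
        + toCLM (NormedSpace.exp (s • M)) (-(M.mulVec (e s)) + w s)
        = (NormedSpace.exp (s • M)).mulVec (w s) := by
      simp only [toCLM_apply]
      rw [← Matrix.mulVec_mulVec, Matrix.mulVec_add, Matrix.mulVec_neg]
      abel
    rw [heq] at this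
    exact this
  have hcont_int : Continuous fun s : ℝ => (NormedSpace.exp (s • M)).mulVec (w s) := by
    have : Continuous fun s : ℝ => toCLM (NormedSpace.exp (s • M)) := toCLM.continuous.comp hQcont
    exact this.clm_apply hw
  have hftc : ∫ s in (0:ℝ)..t, (NormedSpace.exp (s • M)).mulVec (w s) = g t - g 0 := by
    apply intervalIntegral.integral_eq_sub_of_hasDerivAt
    · intro s hs
      rw [Set.uIcc_of_le ht] at hs
      exact hg s hs.1
    · exact hcont_int.intervalIntegrable _ _
  have hinv : (NormedSpace.exp ((-t) • M)) * (NormedSpace.exp (t • M)) = 1 := by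
    rw [exp_smul_add', neg_add_cancel, zero_smul, exp_zero]
  have hg0 : g 0 = e 0 := by
    simp [hg_def, zero_smul, exp_zero, Matrix.one_mulVec]
  have het : e t = (NormedSpace.exp ((-t) • M)).mulVec (g t) := by
    rw [hg_def]
    simp only
    rw [Matrix.mulVec_mulVec, hinv, Matrix.one_mulVec]
  rw [het, show g t = g 0 + ∫ s in (0:ℝ)..t, (NormedSpace.exp (s • M)).mulVec (w s) by
    rw [hftc]; abel]
  rw [Matrix.mulVec_add, hg0]
  congr 1
  have hint2 : IntervalIntegrable (fun s : ℝ => (NormedSpace.exp (s • M)).mulVec (w s))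
      MeasureTheory.volume (0:ℝ) t := hcont_int.intervalIntegrable 0 t
  have hpull := (toCLM (NormedSpace.exp ((-t) • M))).intervalIntegral_comp_comm hint2
  rw [show (NormedSpace.exp ((-t) • M)).mulVec (∫ s in (0:ℝ)..t, (NormedSpace.exp (s • M)).mulVec (w s))
      = toCLM (NormedSpace.exp ((-t) • M)) (∫ s in (0:ℝ)..t, (NormedSpace.exp (s • M)).mulVec (w s)) from rfl,
    ← hpull]
  apply intervalIntegral.integral_congr
  intro s _
  simp only [toCLM_apply]
  rw [Matrix.mulVec_mulVec, exp_smul_add']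
  congr 2
  ring

end MatrixExpFacts

section VsupVinf

variable {n : Type*} [Fintype n] [DecidableEq n] [Nonempty n]

noncomputable def vsup (x : n → ℝ) : ℝ := Finset.univ.sup' Finset.univ_nonempty x
noncomputable def vinf (x : n → ℝ) : ℝ := Finset.univ.inf' Finset.univ_nonempty x

lemma le_vsup (x : n → ℝ) (i : n) : x i ≤ vsup x :=
  Finset.le_sup' x (Finset.mem_univ i)

lemma vinf_le (x : n → ℝ) (i : n) : vinf x ≤ x i :=
  Finset.inf'_le x (Finset.mem_univ i)

lemma vinf_le_vsup (x : n → ℝ) : vinf x ≤ vsup x :=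
  le_trans (vinf_le x (Classical.arbitrary n)) (le_vsup x _)

lemma abs_le_of_between {x p q : ℝ} (h1 : p ≤ x) (h2 : x ≤ q) {y : ℝ} (h3 : p ≤ y) (h4 : y ≤ q) :
    |x - y| ≤ q - p := by
  rw [abs_sub_le_iff]; constructor <;> linarith

variable {S : Matrix n n ℝ} (hnn : ∀ i j, 0 ≤ S i j) (hrow : ∀ i, ∑ j, S i j = 1)

include hnn hrow in
lemma mulVec_le_vsup (x : n → ℝ) (i : n) : S.mulVec x i ≤ vsup x := by
  rw [Matrix.mulVec, dotProduct]
  calc ∑ j, S i j * x j ≤ ∑ j, S i j * vsup x :=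
        Finset.sum_le_sum fun j _ => mul_le_mul_of_nonneg_left (le_vsup x j) (hnn i j)
    _ = (∑ j, S i j) * vsup x := by rw [Finset.sum_mul]
    _ = vsup x := by rw [hrow i, one_mul]

include hnn hrow in
lemma vinf_le_mulVec (x : n → ℝ) (i : n) : vinf x ≤ S.mulVec x i := by
  rw [Matrix.mulVec, dotProduct]
  calc vinf x = (∑ j, S i j) * vinf x := by rw [hrow i, one_mul]
    _ = ∑ j, S i j * vinf x := by rw [Finset.sum_mul]
    _ ≤ ∑ j, S i j * x j :=
        Finset.sum_le_sum fun j _ => mul_le_mul_of_nonneg_left (vinf_le x j) (hnn i j)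

include hnn hrow in
lemma mulVec_sub_self_abs_le (x : n → ℝ) (i : n) :
    |S.mulVec x i - x i| ≤ vsup x - vinf x :=
  abs_le_of_between (vinf_le_mulVec hnn hrow x i) (mulVec_le_vsup hnn hrow x i)
    (vinf_le x i) (le_vsup x i)

include hnn hrow in
lemma pc_contraction {δ : ℝ} (hδ : 0 ≤ δ) (r : n) (hcol : ∀ i, δ ≤ S i r) (x : n → ℝ) :
    vsup (S.mulVec x) - vinf (S.mulVec x) ≤ (1 - δ) * (vsup x - vinf x) := by
  have key_up : ∀ i, S.mulVec x i ≤ δ * x r + (1 - δ) * vsup x := by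
    intro i
    rw [Matrix.mulVec, dotProduct]
    have hsplit : ∑ j, S i j * x j
        = δ * x r + ∑ j, (S i j - if j = r then δ else 0) * x j := by
      have : ∑ j, (S i j - if j = r then δ else 0) * x j
          = ∑ j, S i j * x j - ∑ j, (if j = r then δ else 0) * x j := by
        rw [← Finset.sum_sub_distrib]; congr 1; funext j; ring
      have h2 : ∑ j, (if j = r then δ else 0) * x j = δ * x r := by
        simp [ite_mul]
      rw [this, h2]; ring
    rw [hsplit]
    have hT : ∀ j, 0 ≤ S i j - if j = r then δ else 0 := by
      intro j
      by_cases h : j = r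
      · subst h; simpa using sub_nonneg.mpr (hcol i)
      · simpa [h] using hnn i j
    have hTsum : ∑ j, (S i j - if j = r then δ else 0) = 1 - δ := by
      rw [Finset.sum_sub_distrib, hrow i]
      simp
    have : ∑ j, (S i j - if j = r then δ else 0) * x j ≤ (1 - δ) * vsup x := by
      calc ∑ j, (S i j - if j = r then δ else 0) * x j
          ≤ ∑ j, (S i j - if j = r then δ else 0) * vsup x :=
            Finset.sum_le_sum fun j _ => mul_le_mul_of_nonneg_left (le_vsup x j) (hT j)
        _ = (1 - δ) * vsup x := by rw [← Finset.sum_mul, hTsum]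
    linarith
  have key_dn : ∀ i, δ * x r + (1 - δ) * vinf x ≤ S.mulVec x i := by
    intro i
    rw [Matrix.mulVec, dotProduct]
    have hsplit : ∑ j, S i j * x j
        = δ * x r + ∑ j, (S i j - if j = r then δ else 0) * x j := by
      have : ∑ j, (S i j - if j = r then δ else 0) * x j
          = ∑ j, S i j * x j - ∑ j, (if j = r then δ else 0) * x j := by
        rw [← Finset.sum_sub_distrib]; congr 1; funext j; ring
      have h2 : ∑ j, (if j = r then δ else 0) * x j = δ * x r := by
        simp [ite_mul]
      rw [this, h2]; ring
    rw [hsplit]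
    have hT : ∀ j, 0 ≤ S i j - if j = r then δ else 0 := by
      intro j
      by_cases h : j = r
      · subst h; simpa using sub_nonneg.mpr (hcol i)
      · simpa [h] using hnn i j
    have hTsum : ∑ j, (S i j - if j = r then δ else 0) = 1 - δ := by
      rw [Finset.sum_sub_distrib, hrow i]
      simp
    have : (1 - δ) * vinf x ≤ ∑ j, (S i j - if j = r then δ else 0) * x j := by
      calc (1 - δ) * vinf x = ∑ j, (S i j - if j = r then δ else 0) * vinf x := by
            rw [← Finset.sum_mul, hTsum]
        _ ≤ ∑ j, (S i j - if j = r then δ else 0) * x j :=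
            Finset.sum_le_sum fun j _ => mul_le_mul_of_nonneg_left (vinf_le x j) (hT j)
    linarith
  have h1 : vsup (S.mulVec x) ≤ δ * x r + (1 - δ) * vsup x :=
    Finset.sup'_le _ _ fun i _ => key_up i
  have h2 : δ * x r + (1 - δ) * vinf x ≤ vinf (S.mulVec x) :=
    Finset.le_inf' _ _ fun i _ => key_dn i
  linarith

end VsupVinf

section Kron

variable {n m : Type*} [Fintype n] [DecidableEq n] [Fintype m] [DecidableEq m]

noncomputable def kronRingHom (n m : Type*) [Fintype n] [DecidableEq n] [Fintype m]
    [DecidableEq m] : Matrix n n ℝ →+* Matrix (n × m) (n × m) ℝ where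
  toFun A := A ⊗ₖ (1 : Matrix m m ℝ)
  map_one' := Matrix.one_kronecker_one
  map_mul' A B := by
    rw [← Matrix.mul_kronecker_mul, one_mul]
  map_zero' := Matrix.zero_kronecker _
  map_add' A B := Matrix.add_kronecker A B _

lemma kronRingHom_continuous : Continuous (kronRingHom n m) := by
  let f : Matrix n n ℝ →ₗ[ℝ] Matrix (n × m) (n × m) ℝ :=
    { toFun := fun A => A ⊗ₖ (1 : Matrix m m ℝ)
      map_add' := fun A B => Matrix.add_kronecker A B _
      map_smul' := fun c A => Matrix.smul_kronecker c A _ }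
  exact f.continuous_of_finiteDimensional

lemma exp_kronecker_one (A : Matrix n n ℝ) :
    NormedSpace.exp (A ⊗ₖ (1 : Matrix m m ℝ)) = NormedSpace.exp A ⊗ₖ (1 : Matrix m m ℝ) :=
  (map_exp (kronRingHom n m) kronRingHom_continuous A).symm

lemma kron_mulVec (P : Matrix n n ℝ) (x : n × m → ℝ) (i : n) (k : m) :
    (P ⊗ₖ (1 : Matrix m m ℝ)).mulVec x (i, k) = P.mulVec (fun j => x (j, k)) i := by
  rw [Matrix.mulVec, dotProduct, Fintype.sum_prod_type]
  rw [Matrix.mulVec, dotProduct]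
  congr 1
  funext j
  rw [Finset.sum_eq_single k]
  · simp [Matrix.kroneckerMap_apply, Matrix.one_apply]
  · intro l _ hl
    simp [Matrix.kroneckerMap_apply, Matrix.one_apply, Ne.symm hl]
  · intro h; simp at h

end Kron

section PFacts

variable {n : Type*} [Fintype n] [DecidableEq n] [Nonempty n]
variable (A : Matrix n n ℝ) (d : ℝ)

lemma P_decomp (t : ℝ) :
    NormedSpace.exp ((-t) • A) = Real.exp (-(t*d)) • NormedSpace.exp (t • (d • (1 : Matrix n n ℝ) - A)) := by
  apply exp_eq_of_sub_smul_one
  ext i j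
  by_cases h : i = j <;> simp [h, Matrix.one_apply] <;> ring

variable {A d}

lemma P_nonneg (hC : ∀ i j, 0 ≤ (d • (1 : Matrix n n ℝ) - A) i j) {t : ℝ} (ht : 0 ≤ t)
    (i j : n) : 0 ≤ NormedSpace.exp ((-t) • A) i j := by
  rw [P_decomp A d]
  have h1 : ∀ i' j', 0 ≤ (t • (d • (1 : Matrix n n ℝ) - A)) i' j' := by
    intro i' j'
    simpa using mul_nonneg ht (hC i' j')
  have := exp_entry_nonneg h1 i j
  simpa using mul_nonneg (Real.exp_nonneg _) this

lemma P_rowsum (hA1 : A.mulVec (fun _ => 1) = 0) (t : ℝ) (i : n) :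
    ∑ j, NormedSpace.exp ((-t) • A) i j = 1 := by
  have h0 : ((-t) • A).mulVec (fun _ => 1) = 0 := by
    rw [Matrix.smul_mulVec, hA1, smul_zero]
  have := congrFun (exp_mulVec_of_mulVec_eq_zero h0) i
  simpa [Matrix.mulVec, dotProduct] using this

lemma P_col_pos (hC : ∀ i j, 0 ≤ (d • (1 : Matrix n n ℝ) - A) i j) {r v : n}
    (hm : ∃ m : ℕ, 0 < ((d • (1 : Matrix n n ℝ) - A) ^ m) v r) :
    0 < NormedSpace.exp ((-(1:ℝ)) • A) v r := by
  obtain ⟨m, hm⟩ := hm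
  rw [P_decomp A d]
  have h1 : NormedSpace.exp ((1:ℝ) • (d • (1 : Matrix n n ℝ) - A)) v r
      = NormedSpace.exp (d • (1 : Matrix n n ℝ) - A) v r := by rw [one_smul]
  have hpos : 0 < NormedSpace.exp ((1:ℝ) • (d • (1 : Matrix n n ℝ) - A)) v r := by
    rw [h1]
    exact exp_entry_pos hC hm
  simpa using mul_pos (Real.exp_pos _) hpos

lemma pow_pos_of_path (C : Matrix n n ℝ) (hnn : ∀ i j, 0 ≤ C i j)
    (rel : n → n → Prop) (hedge : ∀ u v, rel u v → 0 < C v u)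
    {r v : n} (h : Relation.ReflTransGen rel r v) : ∃ m : ℕ, 0 < (C ^ m) v r := by
  induction h with
  | refl => exact ⟨0, by simp [Matrix.one_apply]⟩
  | @tail b c hab hbc ih =>
    obtain ⟨m, hm⟩ := ih
    refine ⟨m + 1, ?_⟩
    rw [pow_succ', Matrix.mul_apply]
    have hterm : 0 < C c b * (C ^ m) b r := mul_pos (hedge b c hbc) hm
    refine lt_of_lt_of_le hterm ?_
    exact Finset.single_le_sum
      (fun j _ => mul_nonneg (hnn c j) (pow_entry_nonneg hnn m j r)) (Finset.mem_univ b)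

/-- Main oscillation decay for the semigroup `exp (-t A)`. -/
lemma P_osc_decay (hA1 : A.mulVec (fun _ => 1) = 0)
    (hC : ∀ i j, 0 ≤ (d • (1 : Matrix n n ℝ) - A) i j) (r : n)
    (hpath : ∀ v, ∃ m : ℕ, 0 < ((d • (1 : Matrix n n ℝ) - A) ^ m) v r) :
    ∃ Cq lam0 : ℝ, 0 < Cq ∧ 0 < lam0 ∧ ∀ t : ℝ, 0 ≤ t → ∀ x : n → ℝ,
      vsup ((NormedSpace.exp ((-t) • A)).mulVec x) - vinf ((NormedSpace.exp ((-t) • A)).mulVec x)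
        ≤ Cq * Real.exp (-(lam0 * t)) * (vsup x - vinf x) := by
  set δ : ℝ := Finset.univ.inf' Finset.univ_nonempty
    (fun v => NormedSpace.exp ((-(1:ℝ)) • A) v r) with hδ_def
  have hδpos : 0 < δ := by
    rw [hδ_def, Finset.lt_inf'_iff]
    exact fun v _ => P_col_pos hC (hpath v)
  have hδle : ∀ v, δ ≤ NormedSpace.exp ((-(1:ℝ)) • A) v r :=
    fun v => Finset.inf'_le _ (Finset.mem_univ v)
  have hδ1 : δ ≤ 1 := by
    refine le_trans (hδle r) ?_
    calc NormedSpace.exp ((-(1:ℝ)) • A) r r ≤ ∑ j, NormedSpace.exp ((-(1:ℝ)) • A) r j :=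
          Finset.single_le_sum (fun j _ => P_nonneg hC zero_le_one r j) (Finset.mem_univ r)
      _ = 1 := P_rowsum hA1 1 r
  set q : ℝ := 1 - δ/2 with hq_def
  have hq0 : 0 < q := by rw [hq_def]; linarith
  have hq1 : q < 1 := by rw [hq_def]; linarith
  have hcontr : ∀ x : n → ℝ,
      vsup ((NormedSpace.exp ((-(1:ℝ)) • A)).mulVec x) - vinf ((NormedSpace.exp ((-(1:ℝ)) • A)).mulVec x)
        ≤ q * (vsup x - vinf x) := by
    intro x
    have := pc_contraction (S := NormedSpace.exp ((-(1:ℝ)) • A))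
      (fun i j => P_nonneg hC zero_le_one i j) (P_rowsum hA1 1)
      (by positivity : (0:ℝ) ≤ δ/2) r
      (fun i => le_trans (by linarith) (hδle i)) x
    calc vsup _ - vinf _ ≤ (1 - δ/2) * (vsup x - vinf x) := this
      _ = q * (vsup x - vinf x) := by rw [hq_def]
  have hsemi : ∀ s u : ℝ, NormedSpace.exp ((-s) • A) * NormedSpace.exp ((-u) • A) = NormedSpace.exp ((-(s+u)) • A) := by
    intro s u
    rw [exp_smul_add']
    congr 1
    ring_nf
  have hdecay_nat : ∀ m : ℕ, ∀ t : ℝ, (m : ℝ) ≤ t → ∀ x : n → ℝ,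
      vsup ((NormedSpace.exp ((-t) • A)).mulVec x) - vinf ((NormedSpace.exp ((-t) • A)).mulVec x)
        ≤ q ^ m * (vsup x - vinf x) := by
    intro m
    induction m with
    | zero =>
      intro t ht x
      simp only [pow_zero, one_mul]
      have ht0 : (0:ℝ) ≤ t := by exact_mod_cast ht
      have h1 : vsup ((NormedSpace.exp ((-t) • A)).mulVec x) ≤ vsup x :=
        Finset.sup'_le _ _ fun i _ =>
          mulVec_le_vsup (fun i j => P_nonneg hC ht0 i j) (P_rowsum hA1 t) x i
      have h2 : vinf x ≤ vinf ((NormedSpace.exp ((-t) • A)).mulVec x) :=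
        Finset.le_inf' _ _ fun i _ =>
          vinf_le_mulVec (fun i j => P_nonneg hC ht0 i j) (P_rowsum hA1 t) x i
      linarith
    | succ m ih =>
      intro t ht x
      have ht1 : (m : ℝ) ≤ t - 1 := by push_cast at ht ⊢; linarith
      have hsplit : (NormedSpace.exp ((-t) • A)).mulVec x
          = (NormedSpace.exp ((-(1:ℝ)) • A)).mulVec ((NormedSpace.exp ((-(t-1)) • A)).mulVec x) := by
        rw [Matrix.mulVec_mulVec, hsemi]
        congr 2
        ring
      rw [hsplit]
      calc vsup _ - vinf _
          ≤ q * (vsup ((NormedSpace.exp ((-(t-1)) • A)).mulVec x)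
              - vinf ((NormedSpace.exp ((-(t-1)) • A)).mulVec x)) := hcontr _
        _ ≤ q * (q ^ m * (vsup x - vinf x)) :=
            mul_le_mul_of_nonneg_left (ih (t-1) ht1 x) (le_of_lt hq0)
        _ = q ^ (m+1) * (vsup x - vinf x) := by rw [pow_succ']; ring
  refine ⟨1/q, -Real.log q, by positivity, by
    have := Real.log_neg hq0 hq1
    linarith, ?_⟩
  intro t ht x
  have hosc0 : 0 ≤ vsup x - vinf x := sub_nonneg.mpr (vinf_le_vsup x)
  have hm : ((⌊t⌋₊ : ℝ)) ≤ t := Nat.floor_le ht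
  have hkey := hdecay_nat ⌊t⌋₊ t hm x
  refine le_trans hkey ?_
  apply mul_le_mul_of_nonneg_right _ hosc0
  -- q ^ ⌊t⌋₊ ≤ (1/q) * exp (-(−log q * t))
  have hlog : Real.log q < 0 := Real.log_neg hq0 hq1
  have hfl : t - 1 ≤ (⌊t⌋₊ : ℝ) := by
    have := Nat.lt_floor_add_one t
    linarith
  calc q ^ ⌊t⌋₊ = Real.exp (Real.log q) ^ ⌊t⌋₊ := by rw [Real.exp_log hq0]
    _ = Real.exp ((⌊t⌋₊ : ℝ) * Real.log q) := by rw [← Real.exp_nat_mul]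
    _ ≤ Real.exp ((t - 1) * Real.log q) := by
        apply Real.exp_le_exp.mpr
        exact mul_le_mul_of_nonpos_right hfl (le_of_lt hlog)
    _ = (1/q) * Real.exp (-(-Real.log q * t)) := by
        rw [sub_mul, Real.exp_sub, one_mul]
        rw [Real.exp_log hq0]
        field_simp
end PFacts

section NormFacts

lemma norm_le_enorm {ι : Type*} [Fintype ι] (v : ι → ℝ) : ‖v‖ ≤ _root_.enorm v := by
  rw [_root_.enorm, pi_norm_le_iff_of_nonneg (Real.sqrt_nonneg _)]
  intro i
  rw [Real.norm_eq_abs, ← Real.sqrt_sq_eq_abs]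
  exact Real.sqrt_le_sqrt (Finset.single_le_sum (fun j _ => sq_nonneg (v j)) (Finset.mem_univ i))

lemma enorm_le_sqrt_card {ι : Type*} [Fintype ι] (v : ι → ℝ) :
    _root_.enorm v ≤ Real.sqrt (Fintype.card ι) * ‖v‖ := by
  rw [_root_.enorm, ← Real.sqrt_sq (norm_nonneg v), ← Real.sqrt_mul (by positivity)]
  apply Real.sqrt_le_sqrt
  calc ∑ i, v i ^ 2 ≤ ∑ _i : ι, ‖v‖ ^ 2 := by
        apply Finset.sum_le_sum
        intro i _
        have h := norm_le_pi_norm v i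
        rw [Real.norm_eq_abs] at h
        nlinarith [abs_nonneg (v i), sq_abs (v i)]
    _ = (Fintype.card ι) * ‖v‖ ^ 2 := by
        rw [Finset.sum_const, nsmul_eq_mul, Fintype.card]

end NormFacts

section IntBounds

lemma int_exp1 (μ t : ℝ) (hμ : 0 < μ) (ht : 0 ≤ t) :
    ∫ s in (0:ℝ)..t, Real.exp (μ * s - μ * t) ≤ 1/μ := by
  have hder : ∀ s ∈ Set.uIcc (0:ℝ) t,
      HasDerivAt (fun u => Real.exp (μ * u - μ * t) / μ) (Real.exp (μ * s - μ * t)) s := by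
    intro s _
    have h1 : HasDerivAt (fun u : ℝ => μ * u - μ * t) μ s := by
      simpa using ((hasDerivAt_id s).const_mul μ).sub_const (μ * t)
    have h3 := h1.exp.div_const μ
    rw [mul_div_assoc, div_self hμ.ne', mul_one] at h3
    exact h3
  have hint : IntervalIntegrable (fun s => Real.exp (μ * s - μ * t))
      MeasureTheory.volume (0:ℝ) t :=
    (Real.continuous_exp.comp (by continuity)).intervalIntegrable 0 t
  rw [intervalIntegral.integral_eq_sub_of_hasDerivAt hder hint]
  have h4 : (0:ℝ) ≤ Real.exp (μ * 0 - μ * t) / μ := by positivity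
  have h5 : Real.exp (μ * t - μ * t) = 1 := by norm_num
  rw [h5]
  linarith

lemma int_exp2 (lw t t' : ℝ) (hlw : 0 < lw) (h : t ≤ t') :
    ∫ s in t..t', Real.exp (-(lw * s)) ≤ Real.exp (-(lw * t))/lw := by
  have hder : ∀ s ∈ Set.uIcc t t',
      HasDerivAt (fun u => -Real.exp (-(lw * u)) / lw) (Real.exp (-(lw * s))) s := by
    intro s _
    have h1 : HasDerivAt (fun u : ℝ => -(lw * u)) (-lw) s := by
      simpa using ((hasDerivAt_neg s).const_mul lw)
    have h3 := (h1.exp.neg).div_const lw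
    rw [mul_neg, neg_neg, mul_div_assoc, div_self hlw.ne', mul_one] at h3
    exact h3
  have hint : IntervalIntegrable (fun s => Real.exp (-(lw * s)))
      MeasureTheory.volume t t' :=
    (Real.continuous_exp.comp (by continuity)).intervalIntegrable t t'
  rw [intervalIntegral.integral_eq_sub_of_hasDerivAt hder hint]
  have h4 : (0:ℝ) ≤ Real.exp (-(lw * t')) / lw := by positivity
  have h5 : -Real.exp (-(lw * t')) / lw = -(Real.exp (-(lw * t')) / lw) := by ring
  have h6 : -Real.exp (-(lw * t)) / lw = -(Real.exp (-(lw * t)) / lw) := by ring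
  rw [h5, h6]
  linarith

end IntBounds

section GraphFacts

lemma lap_mulVec_one {N : ℕ} (a : Fin N → Fin N → ℝ) :
    (graphLaplacian a).mulVec (fun _ => (1:ℝ)) = 0 := by
  funext i
  rw [Matrix.mulVec, dotProduct]
  simp only [mul_one, Pi.zero_apply]
  rw [← Finset.add_sum_erase _ _ (Finset.mem_univ i)]
  have h1 : graphLaplacian a i i = ∑ k ∈ Finset.univ.erase i, a i k := by
    simp [graphLaplacian]
  have h2 : ∑ j ∈ Finset.univ.erase i, graphLaplacian a i j
      = ∑ j ∈ Finset.univ.erase i, -(a i j) := by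
    apply Finset.sum_congr rfl
    intro j hj
    have hji : j ≠ i := (Finset.mem_erase.mp hj).1
    simp [graphLaplacian, (Ne.symm hji : i ≠ j)]
  rw [h1, h2, Finset.sum_neg_distrib]
  ring

end GraphFacts

section MainAux

open MeasureTheory intervalIntegral

theorem main_aux {N : ℕ} [Nonempty (Fin N)]
    (A : Matrix (Fin N) (Fin N) ℝ) (d : ℝ)
    (hA1 : A.mulVec (fun _ => 1) = 0)
    (hC : ∀ i j, 0 ≤ (d • (1 : Matrix (Fin N) (Fin N) ℝ) - A) i j)
    (r : Fin N)
    (hpath : ∀ v, ∃ m : ℕ, 0 < ((d • (1 : Matrix (Fin N) (Fin N) ℝ) - A) ^ m) v r)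
    (w e : ℝ → Fin N × Fin 3 → ℝ) (hw_cont : Continuous w)
    (Kw lw : ℝ) (hKw : 0 ≤ Kw) (hlw : 0 < lw)
    (hw : ∀ s : ℝ, 0 ≤ s → ‖w s‖ ≤ Kw * Real.exp (-(lw * s)))
    (hode : ∀ t : ℝ, 0 ≤ t →
      HasDerivAt e (-((A ⊗ₖ (1 : Matrix (Fin 3) (Fin 3) ℝ)).mulVec (e t)) + w t) t) :
    ∃ estar : Fin N × Fin 3 → ℝ,
      (∀ i j : Fin N, ∀ k : Fin 3, estar (i, k) = estar (j, k)) ∧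
      ∃ C > (0:ℝ), ∃ μ > (0:ℝ), ∀ t : ℝ, 0 ≤ t → ‖e t - estar‖ ≤ C * Real.exp (-(μ * t)) := by
  obtain ⟨Cq, lam0, hCq, hlam0, hdecay⟩ := P_osc_decay hA1 hC r hpath
  set A3 : Matrix (Fin N × Fin 3) (Fin N × Fin 3) ℝ
    := A ⊗ₖ (1 : Matrix (Fin 3) (Fin 3) ℝ) with hA3_def
  have hP3kron : ∀ t : ℝ,
      NormedSpace.exp ((-t) • A3) = (NormedSpace.exp ((-t) • A)) ⊗ₖ 1 := by
    intro t
    rw [hA3_def, ← Matrix.smul_kronecker, exp_kronecker_one]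
  have hslice : ∀ (t : ℝ) (y : Fin N × Fin 3 → ℝ) (i : Fin N) (k : Fin 3),
      (NormedSpace.exp ((-t) • A3)).mulVec y (i, k)
        = (NormedSpace.exp ((-t) • A)).mulVec (fun j => y (j, k)) i := by
    intro t y i k
    rw [hP3kron, kron_mulVec]
  have hrep : ∀ t : ℝ, 0 ≤ t → e t = (NormedSpace.exp ((-t) • A3)).mulVec (e 0)
      + ∫ s in (0:ℝ)..t, (NormedSpace.exp ((-(t-s)) • A3)).mulVec (w s) :=
    fun t ht => voc A3 w e hw_cont hode t ht
  -- oscillation of a slice is at most 2‖y‖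
  have hosc_norm : ∀ (y : Fin N × Fin 3 → ℝ) (k : Fin 3),
      vsup (fun j => y (j, k)) - vinf (fun j => y (j, k)) ≤ 2 * ‖y‖ := by
    intro y k
    have h1 : vsup (fun j => y (j, k)) ≤ ‖y‖ :=
      Finset.sup'_le _ _ fun j _ =>
        le_trans (le_abs_self _) (le_of_eq_of_le (Real.norm_eq_abs _).symm
          (norm_le_pi_norm y (j, k)))
    have h2 : -‖y‖ ≤ vinf (fun j => y (j, k)) :=
      Finset.le_inf' _ _ fun j _ => by
        have := norm_le_pi_norm y (j, k)
        rw [Real.norm_eq_abs] at this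
        have := neg_abs_le (y (j, k))
        linarith [norm_le_pi_norm y (j, k), neg_abs_le (y (j, k)),
          (Real.norm_eq_abs (y (j,k))).symm.le]
    linarith
  have hosc_norm' : ∀ (y : Fin N × Fin 3 → ℝ) (k : Fin 3) (t : ℝ), 0 ≤ t →
      vsup ((NormedSpace.exp ((-t) • A)).mulVec (fun j => y (j, k)))
        - vinf ((NormedSpace.exp ((-t) • A)).mulVec (fun j => y (j, k)))
        ≤ Cq * Real.exp (-(lam0 * t)) * (2 * ‖y‖) := by
    intro y k t ht
    refine le_trans (hdecay t ht _) ?_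
    exact mul_le_mul_of_nonneg_left (hosc_norm y k) (by positivity)
  -- key coordinatewise estimate
  have hkey : ∀ (τ t : ℝ), 0 ≤ τ → 0 ≤ t → ∀ (y : Fin N × Fin 3 → ℝ) (i : Fin N) (k : Fin 3),
      |(NormedSpace.exp ((-τ) • A3)).mulVec
          ((NormedSpace.exp ((-t) • A3)).mulVec y) (i, k)
        - (NormedSpace.exp ((-t) • A3)).mulVec y (i, k)|
        ≤ Cq * Real.exp (-(lam0 * t)) * (2 * ‖y‖) := by
    intro τ t hτ ht y i k
    have hsl : (fun j => (NormedSpace.exp ((-t) • A3)).mulVec y (j, k))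
        = (NormedSpace.exp ((-t) • A)).mulVec (fun j => y (j, k)) :=
      funext fun j => hslice t y j k
    rw [hslice τ _ i k, hslice t y i k, hsl]
    refine le_trans (mulVec_sub_self_abs_le (P_nonneg hC hτ) (P_rowsum hA1 τ) _ i) ?_
    exact hosc_norm' y k t ht
  have hkey2 : ∀ (t : ℝ), 0 ≤ t → ∀ (y : Fin N × Fin 3 → ℝ) (i j : Fin N) (k : Fin 3),
      |(NormedSpace.exp ((-t) • A3)).mulVec y (i, k)
        - (NormedSpace.exp ((-t) • A3)).mulVec y (j, k)|
        ≤ Cq * Real.exp (-(lam0 * t)) * (2 * ‖y‖) := by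
    intro t ht y i j k
    rw [hslice t y i k, hslice t y j k]
    refine le_trans (abs_le_of_between (vinf_le _ i) (le_vsup _ i) (vinf_le _ j) (le_vsup _ j)) ?_
    exact hosc_norm' y k t ht
  -- stochastic norm bound
  have hP3bound : ∀ (t : ℝ), 0 ≤ t → ∀ y : Fin N × Fin 3 → ℝ,
      ‖(NormedSpace.exp ((-t) • A3)).mulVec y‖ ≤ ‖y‖ := by
    intro t ht y
    rw [pi_norm_le_iff_of_nonneg (norm_nonneg y)]
    rintro ⟨i, k⟩
    rw [hslice t y i k, Real.norm_eq_abs, abs_le]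
    constructor
    · have h1 := vinf_le_mulVec (P_nonneg hC ht) (P_rowsum hA1 t) (fun j => y (j, k)) i
      have h2 : -‖y‖ ≤ vinf (fun j => y (j, k)) :=
        Finset.le_inf' _ _ fun j _ => by
          have h3 := norm_le_pi_norm y (j, k)
          rw [Real.norm_eq_abs] at h3
          linarith [neg_abs_le (y (j, k))]
      linarith
    · have h1 := mulVec_le_vsup (P_nonneg hC ht) (P_rowsum hA1 t) (fun j => y (j, k)) i
      have h2 : vsup (fun j => y (j, k)) ≤ ‖y‖ :=
        Finset.sup'_le _ _ fun j _ => by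
          have h3 := norm_le_pi_norm y (j, k)
          rw [Real.norm_eq_abs] at h3
          linarith [le_abs_self (y (j, k))]
      linarith
  -- continuity and integrability of the integrand
  have hcontP3w : ∀ t : ℝ, Continuous (fun s : ℝ =>
      (NormedSpace.exp ((-(t - s)) • A3)).mulVec (w s)) := by
    intro t
    have h1 : Continuous (fun s : ℝ => -(t - s)) :=
      (continuous_const.sub continuous_id).neg
    have h2 : Continuous (fun s : ℝ => NormedSpace.exp ((-(t - s)) • A3)) :=
      (exp_smul_continuous A3).comp h1
    exact (toCLM.continuous.comp h2).clm_apply hw_cont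
  have hInt : ∀ t a b : ℝ, IntervalIntegrable (fun s : ℝ =>
      (NormedSpace.exp ((-(t - s)) • A3)).mulVec (w s)) MeasureTheory.volume a b :=
    fun t a b => (hcontP3w t).intervalIntegrable a b
  -- the rate
  set μ : ℝ := min lam0 lw / 2 with hμ_def
  have hμpos : 0 < μ := by
    rw [hμ_def]
    have := lt_min hlam0 hlw
    linarith
  have hμlam : 2 * μ ≤ lam0 := by
    rw [hμ_def]; have := min_le_left lam0 lw; linarith
  have hμlw : 2 * μ ≤ lw := by
    rw [hμ_def]; have := min_le_right lam0 lw; linarith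
  have hexpineq : ∀ s t : ℝ, 0 ≤ s → s ≤ t →
      Real.exp (-(lam0 * (t - s))) * Real.exp (-(lw * s))
        ≤ Real.exp (-(μ * t)) * Real.exp (μ * s - μ * t) := by
    intro s t hs hst
    rw [← Real.exp_add, ← Real.exp_add]
    apply Real.exp_le_exp.mpr
    nlinarith [mul_nonneg (by linarith : (0:ℝ) ≤ lam0 - 2*μ) (by linarith : (0:ℝ) ≤ t - s),
      mul_nonneg (by linarith : (0:ℝ) ≤ lw - 2*μ) hs, mul_nonneg hμpos.le hs]
  -- exp monotonicity helpers
  have hexple : ∀ t : ℝ, 0 ≤ t → Real.exp (-(lam0 * t)) ≤ Real.exp (-(μ * t)) := by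
    intro t ht
    apply Real.exp_le_exp.mpr
    nlinarith [mul_nonneg hμpos.le ht]
  have hexplwle : ∀ t : ℝ, 0 ≤ t → Real.exp (-(lw * t)) ≤ Real.exp (-(μ * t)) := by
    intro t ht
    apply Real.exp_le_exp.mpr
    nlinarith [mul_nonneg hμpos.le ht]
  -- pointwise bound for the middle integrand
  have hptw : ∀ t t' : ℝ, 0 ≤ t → t ≤ t' → ∀ s : ℝ, 0 ≤ s → s ≤ t →
      ‖(NormedSpace.exp ((-(t' - s)) • A3)).mulVec (w s)
        - (NormedSpace.exp ((-(t - s)) • A3)).mulVec (w s)‖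
        ≤ 2 * Cq * Kw * (Real.exp (-(μ * t)) * Real.exp (μ * s - μ * t)) := by
    intro t t' ht htt' s hs hst
    have hsplit : (NormedSpace.exp ((-(t' - s)) • A3)).mulVec (w s)
        = (NormedSpace.exp ((-(t' - t)) • A3)).mulVec
            ((NormedSpace.exp ((-(t - s)) • A3)).mulVec (w s)) := by
      rw [Matrix.mulVec_mulVec, exp_smul_add']
      congr 2
      ring
    rw [hsplit]
    have hws : ‖w s‖ ≤ Kw * Real.exp (-(lw * s)) := hw s hs
    have hcoord : ∀ p : Fin N × Fin 3,
        ‖((NormedSpace.exp ((-(t' - t)) • A3)).mulVec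
            ((NormedSpace.exp ((-(t - s)) • A3)).mulVec (w s))
          - (NormedSpace.exp ((-(t - s)) • A3)).mulVec (w s)) p‖
        ≤ 2 * Cq * Kw * (Real.exp (-(μ * t)) * Real.exp (μ * s - μ * t)) := by
      rintro ⟨i, k⟩
      rw [Pi.sub_apply, Real.norm_eq_abs]
      refine le_trans (hkey (t' - t) (t - s) (by linarith) (by linarith) (w s) i k) ?_
      calc Cq * Real.exp (-(lam0 * (t - s))) * (2 * ‖w s‖)
          ≤ Cq * Real.exp (-(lam0 * (t - s))) * (2 * (Kw * Real.exp (-(lw * s)))) := by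
            apply mul_le_mul_of_nonneg_left _ (by positivity)
            linarith
        _ = 2 * Cq * Kw * (Real.exp (-(lam0 * (t - s))) * Real.exp (-(lw * s))) := by ring
        _ ≤ 2 * Cq * Kw * (Real.exp (-(μ * t)) * Real.exp (μ * s - μ * t)) := by
            apply mul_le_mul_of_nonneg_left (hexpineq s t hs hst) (by positivity)
    rw [pi_norm_le_iff_of_nonneg (by positivity)]
    exact hcoord
  -- integral of the exponential bound
  have hgcont : ∀ t : ℝ, IntervalIntegrable
      (fun s : ℝ => 2 * Cq * Kw * (Real.exp (-(μ * t)) * Real.exp (μ * s - μ * t)))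
      MeasureTheory.volume 0 t := by
    intro t
    apply Continuous.intervalIntegrable
    exact continuous_const.mul (continuous_const.mul (Real.continuous_exp.comp
      ((continuous_const.mul continuous_id).sub continuous_const)))
  have hgint : ∀ t : ℝ, 0 ≤ t →
      |∫ s in (0:ℝ)..t, 2 * Cq * Kw * (Real.exp (-(μ * t)) * Real.exp (μ * s - μ * t))|
        ≤ 2 * Cq * Kw * (1/μ) * Real.exp (-(μ * t)) := by
    intro t ht
    have hfact : (fun s : ℝ => 2 * Cq * Kw * (Real.exp (-(μ * t)) * Real.exp (μ * s - μ * t)))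
        = fun s : ℝ => (2 * Cq * Kw * Real.exp (-(μ * t))) * Real.exp (μ * s - μ * t) := by
      funext s; ring
    rw [hfact, intervalIntegral.integral_const_mul]
    have hI0 : 0 ≤ ∫ s in (0:ℝ)..t, Real.exp (μ * s - μ * t) :=
      intervalIntegral.integral_nonneg ht (fun u _ => (Real.exp_pos _).le)
    have hI1 : (∫ s in (0:ℝ)..t, Real.exp (μ * s - μ * t)) ≤ 1/μ := int_exp1 μ t hμpos ht
    rw [abs_mul, abs_of_nonneg (by positivity : (0:ℝ) ≤ 2 * Cq * Kw * Real.exp (-(μ * t))),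
      abs_of_nonneg hI0]
    calc 2 * Cq * Kw * Real.exp (-(μ * t)) * ∫ s in (0:ℝ)..t, Real.exp (μ * s - μ * t)
        ≤ 2 * Cq * Kw * Real.exp (-(μ * t)) * (1/μ) :=
          mul_le_mul_of_nonneg_left hI1 (by positivity)
      _ = 2 * Cq * Kw * (1/μ) * Real.exp (-(μ * t)) := by ring
  -- bound on the middle integral
  have hmid : ∀ t t' : ℝ, 0 ≤ t → t ≤ t' →
      ‖∫ s in (0:ℝ)..t, ((NormedSpace.exp ((-(t' - s)) • A3)).mulVec (w s)
          - (NormedSpace.exp ((-(t - s)) • A3)).mulVec (w s))‖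
        ≤ 2 * Cq * Kw * (1/μ) * Real.exp (-(μ * t)) := by
    intro t t' ht htt'
    have hae : ∀ᵐ s ∂(MeasureTheory.volume.restrict (Set.uIoc (0:ℝ) t)),
        ‖(NormedSpace.exp ((-(t' - s)) • A3)).mulVec (w s)
          - (NormedSpace.exp ((-(t - s)) • A3)).mulVec (w s)‖
          ≤ 2 * Cq * Kw * (Real.exp (-(μ * t)) * Real.exp (μ * s - μ * t)) := by
      refine (MeasureTheory.ae_restrict_mem measurableSet_uIoc).mono (fun s hs => ?_)
      rw [Set.uIoc_of_le ht] at hs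
      exact hptw t t' ht htt' s hs.1.le hs.2
    rw [Set.uIoc_of_le ht] at hae
    refine le_trans (intervalIntegral.norm_integral_le_of_norm_le ht
      ((MeasureTheory.ae_restrict_iff' measurableSet_Ioc).mp hae) (hgcont t)) ?_
    exact le_trans (le_abs_self _) (hgint t ht)
  -- bound on the tail integral
  have htail : ∀ t t' : ℝ, 0 ≤ t → t ≤ t' →
      ‖∫ s in t..t', (NormedSpace.exp ((-(t' - s)) • A3)).mulVec (w s)‖
        ≤ Kw / lw * Real.exp (-(μ * t)) := by
    intro t t' ht htt'
    have hae : ∀ᵐ s ∂(MeasureTheory.volume.restrict (Set.uIoc t t')),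
        ‖(NormedSpace.exp ((-(t' - s)) • A3)).mulVec (w s)‖
          ≤ Kw * Real.exp (-(lw * s)) := by
      refine (MeasureTheory.ae_restrict_mem measurableSet_uIoc).mono (fun s hs => ?_)
      rw [Set.uIoc_of_le htt'] at hs
      refine le_trans (hP3bound (t' - s) (by linarith [hs.2]) (w s)) ?_
      exact hw s (by linarith [hs.1])
    have hgc : IntervalIntegrable (fun s : ℝ => Kw * Real.exp (-(lw * s)))
        MeasureTheory.volume t t' := by
      apply Continuous.intervalIntegrable
      exact continuous_const.mul (Real.continuous_exp.comp
        (continuous_const.mul continuous_id).neg)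
    rw [Set.uIoc_of_le htt'] at hae
    refine le_trans (intervalIntegral.norm_integral_le_of_norm_le htt'
      ((MeasureTheory.ae_restrict_iff' measurableSet_Ioc).mp hae) hgc) ?_
    rw [intervalIntegral.integral_const_mul]
    have hI0 : 0 ≤ ∫ s in t..t', Real.exp (-(lw * s)) :=
      intervalIntegral.integral_nonneg htt' (fun u _ => (Real.exp_pos _).le)
    have hI1 := int_exp2 lw t t' hlw htt'
    calc Kw * ∫ s in t..t', Real.exp (-(lw * s))
        ≤ Kw * (Real.exp (-(lw * t)) / lw) := mul_le_mul_of_nonneg_left hI1 hKw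
      _ = Kw / lw * Real.exp (-(lw * t)) := by ring
      _ ≤ Kw / lw * Real.exp (-(μ * t)) :=
          mul_le_mul_of_nonneg_left (hexplwle t ht) (by positivity)
  -- bound on the head term
  have hhead : ∀ t t' : ℝ, 0 ≤ t → t ≤ t' →
      ‖(NormedSpace.exp ((-t') • A3)).mulVec (e 0)
        - (NormedSpace.exp ((-t) • A3)).mulVec (e 0)‖
        ≤ 2 * Cq * ‖e 0‖ * Real.exp (-(μ * t)) := by
    intro t t' ht htt'
    have hsplit : (NormedSpace.exp ((-t') • A3)).mulVec (e 0)
        = (NormedSpace.exp ((-(t' - t)) • A3)).mulVec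
            ((NormedSpace.exp ((-t) • A3)).mulVec (e 0)) := by
      rw [Matrix.mulVec_mulVec, exp_smul_add']
      congr 2
      ring
    rw [hsplit, pi_norm_le_iff_of_nonneg (by positivity)]
    rintro ⟨i, k⟩
    rw [Pi.sub_apply, Real.norm_eq_abs]
    refine le_trans (hkey (t' - t) t (by linarith) ht (e 0) i k) ?_
    calc Cq * Real.exp (-(lam0 * t)) * (2 * ‖e 0‖)
        ≤ Cq * Real.exp (-(μ * t)) * (2 * ‖e 0‖) :=
          mul_le_mul_of_nonneg_right
            (mul_le_mul_of_nonneg_left (hexple t ht) hCq.le) (by positivity)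
      _ = 2 * Cq * ‖e 0‖ * Real.exp (-(μ * t)) := by ring
  -- the Cauchy-type estimate
  set C0 : ℝ := 2 * Cq * ‖e 0‖ + 2 * Cq * Kw * (1/μ) + Kw / lw with hC0_def
  have hC0nn : 0 ≤ C0 := by rw [hC0_def]; positivity
  have hCauchy : ∀ t t' : ℝ, 0 ≤ t → t ≤ t' → ‖e t' - e t‖ ≤ C0 * Real.exp (-(μ * t)) := by
    intro t t' ht htt'
    have ht' : 0 ≤ t' := le_trans ht htt'
    have hsplitI : (∫ s in (0:ℝ)..t', (NormedSpace.exp ((-(t' - s)) • A3)).mulVec (w s))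
        = (∫ s in (0:ℝ)..t, (NormedSpace.exp ((-(t' - s)) • A3)).mulVec (w s))
          + ∫ s in t..t', (NormedSpace.exp ((-(t' - s)) • A3)).mulVec (w s) :=
      (intervalIntegral.integral_add_adjacent_intervals (hInt t' 0 t) (hInt t' t t')).symm
    have hdiffint : (∫ s in (0:ℝ)..t, (NormedSpace.exp ((-(t' - s)) • A3)).mulVec (w s))
        - (∫ s in (0:ℝ)..t, (NormedSpace.exp ((-(t - s)) • A3)).mulVec (w s))
        = ∫ s in (0:ℝ)..t, ((NormedSpace.exp ((-(t' - s)) • A3)).mulVec (w s)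
            - (NormedSpace.exp ((-(t - s)) • A3)).mulVec (w s)) :=
      (intervalIntegral.integral_sub (hInt t' 0 t) (hInt t 0 t)).symm
    have hsum : e t' - e t
        = ((NormedSpace.exp ((-t') • A3)).mulVec (e 0)
            - (NormedSpace.exp ((-t) • A3)).mulVec (e 0))
          + ((∫ s in (0:ℝ)..t, ((NormedSpace.exp ((-(t' - s)) • A3)).mulVec (w s)
              - (NormedSpace.exp ((-(t - s)) • A3)).mulVec (w s)))
            + ∫ s in t..t', (NormedSpace.exp ((-(t' - s)) • A3)).mulVec (w s)) := by
      rw [hrep t' ht', hrep t ht, hsplitI, ← hdiffint]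
      abel
    rw [hsum]
    refine le_trans (norm_add_le _ _) ?_
    refine le_trans (add_le_add (hhead t t' ht htt')
      (le_trans (norm_add_le _ _)
        (add_le_add (hmid t t' ht htt') (htail t t' ht htt')))) ?_
    apply le_of_eq
    rw [hC0_def]
    ring
  -- coordinates of the interval integral
  have hcoordI : ∀ (t : ℝ) (p : Fin N × Fin 3),
      (∫ s in (0:ℝ)..t, (NormedSpace.exp ((-(t - s)) • A3)).mulVec (w s)) p
        = ∫ s in (0:ℝ)..t, ((NormedSpace.exp ((-(t - s)) • A3)).mulVec (w s)) p := by
    intro t p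
    have h := (ContinuousLinearMap.proj (R := ℝ)
      (φ := fun _ : Fin N × Fin 3 => ℝ) p).intervalIntegral_comp_comm (hInt t 0 t)
    simp only [ContinuousLinearMap.proj_apply] at h
    exact h.symm
  -- consensus estimate
  set C1 : ℝ := 2 * Cq * ‖e 0‖ + 2 * Cq * Kw * (1/μ) with hC1_def
  have hcons : ∀ t : ℝ, 0 ≤ t → ∀ (i j : Fin N) (k : Fin 3),
      |e t (i, k) - e t (j, k)| ≤ C1 * Real.exp (-(μ * t)) := by
    intro t ht i j k
    have hXi : IntervalIntegrable
        (fun s => ((NormedSpace.exp ((-(t - s)) • A3)).mulVec (w s)) (i, k))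
        MeasureTheory.volume 0 t :=
      ((continuous_apply (i, k)).comp (hcontP3w t)).intervalIntegrable 0 t
    have hXj : IntervalIntegrable
        (fun s => ((NormedSpace.exp ((-(t - s)) • A3)).mulVec (w s)) (j, k))
        MeasureTheory.volume 0 t :=
      ((continuous_apply (j, k)).comp (hcontP3w t)).intervalIntegrable 0 t
    have heq : e t (i, k) - e t (j, k)
        = ((NormedSpace.exp ((-t) • A3)).mulVec (e 0) (i, k)
            - (NormedSpace.exp ((-t) • A3)).mulVec (e 0) (j, k))
          + ∫ s in (0:ℝ)..t, (((NormedSpace.exp ((-(t - s)) • A3)).mulVec (w s)) (i, k)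
              - ((NormedSpace.exp ((-(t - s)) • A3)).mulVec (w s)) (j, k)) := by
      rw [intervalIntegral.integral_sub hXi hXj]
      conv_lhs => rw [hrep t ht]
      simp only [Pi.add_apply]
      rw [hcoordI t (i, k), hcoordI t (j, k)]
      ring
    rw [heq]
    refine le_trans (abs_add_le _ _) ?_
    have hb1 : |(NormedSpace.exp ((-t) • A3)).mulVec (e 0) (i, k)
        - (NormedSpace.exp ((-t) • A3)).mulVec (e 0) (j, k)|
        ≤ 2 * Cq * ‖e 0‖ * Real.exp (-(μ * t)) := by
      refine le_trans (hkey2 t ht (e 0) i j k) ?_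
      calc Cq * Real.exp (-(lam0 * t)) * (2 * ‖e 0‖)
          ≤ Cq * Real.exp (-(μ * t)) * (2 * ‖e 0‖) :=
            mul_le_mul_of_nonneg_right
              (mul_le_mul_of_nonneg_left (hexple t ht) hCq.le) (by positivity)
        _ = 2 * Cq * ‖e 0‖ * Real.exp (-(μ * t)) := by ring
    have hb2 : |∫ s in (0:ℝ)..t, (((NormedSpace.exp ((-(t - s)) • A3)).mulVec (w s)) (i, k)
        - ((NormedSpace.exp ((-(t - s)) • A3)).mulVec (w s)) (j, k))|
        ≤ 2 * Cq * Kw * (1/μ) * Real.exp (-(μ * t)) := by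
      have hae : ∀ᵐ s ∂(MeasureTheory.volume.restrict (Set.uIoc (0:ℝ) t)),
          ‖((NormedSpace.exp ((-(t - s)) • A3)).mulVec (w s)) (i, k)
            - ((NormedSpace.exp ((-(t - s)) • A3)).mulVec (w s)) (j, k)‖
            ≤ 2 * Cq * Kw * (Real.exp (-(μ * t)) * Real.exp (μ * s - μ * t)) := by
        refine (MeasureTheory.ae_restrict_mem measurableSet_uIoc).mono (fun s hs => ?_)
        rw [Set.uIoc_of_le ht] at hs
        rw [Real.norm_eq_abs]
        refine le_trans (hkey2 (t - s) (by linarith [hs.2]) (w s) i j k) ?_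
        calc Cq * Real.exp (-(lam0 * (t - s))) * (2 * ‖w s‖)
            ≤ Cq * Real.exp (-(lam0 * (t - s))) * (2 * (Kw * Real.exp (-(lw * s)))) := by
              apply mul_le_mul_of_nonneg_left _ (by positivity)
              linarith [hw s hs.1.le]
          _ = 2 * Cq * Kw * (Real.exp (-(lam0 * (t - s))) * Real.exp (-(lw * s))) := by ring
          _ ≤ 2 * Cq * Kw * (Real.exp (-(μ * t)) * Real.exp (μ * s - μ * t)) :=
              mul_le_mul_of_nonneg_left (hexpineq s t hs.1.le hs.2) (by positivity)
      rw [Set.uIoc_of_le ht] at hae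
      have := intervalIntegral.norm_integral_le_of_norm_le ht
        ((MeasureTheory.ae_restrict_iff' measurableSet_Ioc).mp hae) (hgcont t)
      rw [Real.norm_eq_abs] at this
      exact le_trans this (le_trans (le_abs_self _) (hgint t ht))
    refine le_trans (add_le_add hb1 hb2) ?_
    apply le_of_eq
    rw [hC1_def]
    ring
  -- existence of the limit
  have htend0 : Filter.Tendsto (fun n : ℕ => C0 * Real.exp (-(μ * n)))
      Filter.atTop (nhds 0) := by
    have hpow : (fun n : ℕ => Real.exp (-(μ * n))) = fun n : ℕ => Real.exp (-μ) ^ n := by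
      funext n
      rw [← Real.exp_nat_mul]
      congr 1
      ring
    have h1 : Filter.Tendsto (fun n : ℕ => Real.exp (-(μ * n))) Filter.atTop (nhds 0) := by
      rw [hpow]
      exact tendsto_pow_atTop_nhds_zero_of_lt_one (Real.exp_nonneg _)
        (Real.exp_lt_one_iff.mpr (by linarith))
    have := h1.const_mul C0
    simpa using this
  have hcseq : CauchySeq (fun n : ℕ => e n) := by
    apply cauchySeq_of_le_tendsto_0 (fun n : ℕ => C0 * Real.exp (-(μ * n))) _ htend0
    intro n m NN hn hm
    have hmono : ∀ n m : ℕ, n ≤ m → NN ≤ n →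
        dist (e n) (e m) ≤ C0 * Real.exp (-(μ * NN)) := by
      intro n m hnm hNn
      rw [dist_eq_norm, norm_sub_rev]
      refine le_trans (hCauchy n m (Nat.cast_nonneg n) (by exact_mod_cast hnm)) ?_
      apply mul_le_mul_of_nonneg_left _ hC0nn
      apply Real.exp_le_exp.mpr
      have : (NN : ℝ) ≤ (n : ℝ) := by exact_mod_cast hNn
      nlinarith [hμpos.le]
    rcases le_total n m with h | h
    · exact hmono n m h hn
    · rw [dist_comm]
      exact hmono m n h hm
  obtain ⟨estar, hestar⟩ := cauchySeq_tendsto_of_complete hcseq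
  refine ⟨estar, ?_, C0 + 1, by linarith, μ, hμpos, ?_⟩
  · -- consensus
    intro i j k
    have hx : Filter.Tendsto (fun n : ℕ => e n (i, k) - e n (j, k)) Filter.atTop
        (nhds (estar (i, k) - estar (j, k))) :=
      ((tendsto_pi_nhds.mp hestar (i, k)).sub (tendsto_pi_nhds.mp hestar (j, k)))
    have hz : Filter.Tendsto (fun n : ℕ => e n (i, k) - e n (j, k)) Filter.atTop (nhds 0) := by
      apply squeeze_zero_norm (a := fun n : ℕ => C1 * Real.exp (-(μ * n)))
      · intro n
        rw [Real.norm_eq_abs]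
        exact hcons n (Nat.cast_nonneg n) i j k
      · have hpow : (fun n : ℕ => Real.exp (-(μ * n))) = fun n : ℕ => Real.exp (-μ) ^ n := by
          funext n
          rw [← Real.exp_nat_mul]
          congr 1
          ring
        have h1 : Filter.Tendsto (fun n : ℕ => Real.exp (-(μ * n))) Filter.atTop (nhds 0) := by
          rw [hpow]
          exact tendsto_pow_atTop_nhds_zero_of_lt_one (Real.exp_nonneg _)
            (Real.exp_lt_one_iff.mpr (by linarith))
        have := h1.const_mul C1
        simpa using this
    have := tendsto_nhds_unique hx hz
    linarith [this]
  · -- the exponential bound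
    intro t ht
    have hnorm_tend : Filter.Tendsto (fun n : ℕ => ‖e t - e n‖) Filter.atTop
        (nhds ‖e t - estar‖) :=
      (Filter.Tendsto.sub tendsto_const_nhds hestar).norm
    have hev : ∀ᶠ n : ℕ in Filter.atTop, ‖e t - e n‖ ≤ C0 * Real.exp (-(μ * t)) := by
      rw [Filter.eventually_atTop]
      refine ⟨⌈t⌉₊, fun n hn => ?_⟩
      have htn : t ≤ (n : ℝ) := le_trans (Nat.le_ceil t) (by exact_mod_cast hn)
      rw [norm_sub_rev]
      exact hCauchy t n ht htn
    have := le_of_tendsto hnorm_tend hev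
    refine le_trans this ?_
    have := Real.exp_pos (-(μ * t))
    nlinarith


end MainAux

/-- solutions of the exponentially perturbed consensus dynamics
`ė = −k_u (L ⊗ I₃) e + w(t)` on a graph with a rooted-out branch converge exponentially to
a point of the consensus set. -/
theorem perturbed_consensus_exponential_convergence
    (N : ℕ) (a : Fin N → Fin N → ℝ) (ha : ∀ i j, 0 ≤ a i j)
    (L : Matrix (Fin N) (Fin N) ℝ) (hL : L = graphLaplacian a)
    (hroot : hasRootedOutBranch a)
    (ku : ℝ) (hku : 0 < ku)
    (w : ℝ → Fin N × Fin 3 → ℝ) (hw_cont : Continuous w)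
    (kw lw : ℝ) (hkw : 0 < kw) (hlw : 0 < lw)
    (hw_bound : ∀ t : ℝ, 0 ≤ t → _root_.enorm (w t) ≤ kw * Real.exp (-lw * t) * _root_.enorm (w 0))
    (e : ℝ → Fin N × Fin 3 → ℝ)
    (hode : ∀ t : ℝ, 0 ≤ t →
      HasDerivAt e
        (-(ku • ((L ⊗ₖ (1 : Matrix (Fin 3) (Fin 3) ℝ)).mulVec (e t))) + w t) t) :
    ∃ estar : Fin N × Fin 3 → ℝ,
      (∀ i j : Fin N, ∀ k : Fin 3, estar (i, k) = estar (j, k)) ∧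
      ∃ c > (0 : ℝ), ∃ lam > (0 : ℝ), ∀ t : ℝ, 0 ≤ t →
        _root_.enorm (e t - estar) ≤ c * Real.exp (-lam * t) := by
  obtain ⟨r, hr⟩ := hroot
  have hne : Nonempty (Fin N) := ⟨r⟩
  have htot : 0 ≤ ∑ i, ∑ k, a i k :=
    Finset.sum_nonneg fun i _ => Finset.sum_nonneg fun k _ => ha i k
  have hrowlt : ∀ i : Fin N,
      ku * (∑ k ∈ Finset.univ.erase i, a i k) < 1 + ku * ∑ i, ∑ k, a i k := by
    intro i
    have h1 : ∑ k ∈ Finset.univ.erase i, a i k ≤ ∑ k, a i k :=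
      Finset.sum_le_sum_of_subset_of_nonneg (Finset.subset_univ _) (fun k _ _ => ha i k)
    have h2 : ∑ k, a i k ≤ ∑ i', ∑ k, a i' k :=
      Finset.single_le_sum (fun i' _ => Finset.sum_nonneg fun k _ => ha i' k)
        (Finset.mem_univ i)
    nlinarith [hku.le]
  have hLentry : ∀ i j, L i j
      = if i = j then ∑ k ∈ Finset.univ.erase i, a i k else -(a i j) := by
    intro i j
    rw [hL]
    rfl
  have hCmat : ∀ i j, 0 ≤ ((1 + ku * ∑ i, ∑ k, a i k)
      • (1 : Matrix (Fin N) (Fin N) ℝ) - ku • L) i j := by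
    intro i j
    by_cases h : i = j
    · subst h
      rw [Matrix.sub_apply, Matrix.smul_apply, Matrix.smul_apply, Matrix.one_apply_eq,
        hLentry i i, if_pos rfl]
      have := hrowlt i
      rw [smul_eq_mul, smul_eq_mul]
      linarith
    · rw [Matrix.sub_apply, Matrix.smul_apply, Matrix.smul_apply, Matrix.one_apply_ne h,
        hLentry i j, if_neg h]
      rw [smul_eq_mul, smul_eq_mul]
      have := mul_nonneg hku.le (ha i j)
      nlinarith
  have hedge : ∀ u v : Fin N, 0 < a v u →
      0 < ((1 + ku * ∑ i, ∑ k, a i k) • (1 : Matrix (Fin N) (Fin N) ℝ) - ku • L) v u := by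
    intro u v hvu
    by_cases h : v = u
    · subst h
      rw [Matrix.sub_apply, Matrix.smul_apply, Matrix.smul_apply, Matrix.one_apply_eq,
        hLentry v v, if_pos rfl]
      have := hrowlt v
      rw [smul_eq_mul, smul_eq_mul]
      linarith
    · rw [Matrix.sub_apply, Matrix.smul_apply, Matrix.smul_apply, Matrix.one_apply_ne h,
        hLentry v u, if_neg h]
      rw [smul_eq_mul, smul_eq_mul]
      have := mul_pos hku hvu
      nlinarith
  have hpath : ∀ v : Fin N, ∃ m : ℕ,
      0 < (((1 + ku * ∑ i, ∑ k, a i k)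
        • (1 : Matrix (Fin N) (Fin N) ℝ) - ku • L) ^ m) v r :=
    fun v => pow_pos_of_path _ hCmat (fun u v => 0 < a v u) hedge (hr v)
  have hA1 : (ku • L).mulVec (fun _ => 1) = 0 := by
    rw [Matrix.smul_mulVec, hL, lap_mulVec_one, smul_zero]
  have henorm0 : 0 ≤ _root_.enorm (w 0) := Real.sqrt_nonneg _
  have hw' : ∀ s : ℝ, 0 ≤ s → ‖w s‖ ≤ (kw * _root_.enorm (w 0)) * Real.exp (-(lw * s)) := by
    intro s hs
    refine le_trans (norm_le_enorm (w s)) (le_trans (hw_bound s hs) ?_)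
    apply le_of_eq
    rw [neg_mul]
    ring
  have hode' : ∀ t : ℝ, 0 ≤ t → HasDerivAt e
      (-(((ku • L) ⊗ₖ (1 : Matrix (Fin 3) (Fin 3) ℝ)).mulVec (e t)) + w t) t := by
    intro t ht
    have h := hode t ht
    have heq : ((ku • L) ⊗ₖ (1 : Matrix (Fin 3) (Fin 3) ℝ)).mulVec (e t)
        = ku • ((L ⊗ₖ (1 : Matrix (Fin 3) (Fin 3) ℝ)).mulVec (e t)) := by
      rw [Matrix.smul_kronecker, Matrix.smul_mulVec]
    rw [heq]
    exact h
  obtain ⟨estar, hconsensus, C, hCpos, μ, hμpos, hbound⟩ :=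
    main_aux (ku • L) (1 + ku * ∑ i, ∑ k, a i k) hA1 hCmat r hpath w e hw_cont
      (kw * _root_.enorm (w 0)) lw (mul_nonneg hkw.le henorm0) hlw hw' hode'
  refine ⟨estar, hconsensus,
    Real.sqrt (Fintype.card (Fin N × Fin 3)) * C + 1, by positivity, μ, hμpos, ?_⟩
  intro t ht
  refine le_trans (enorm_le_sqrt_card (e t - estar)) ?_
  have h2 : Real.sqrt (Fintype.card (Fin N × Fin 3)) * ‖e t - estar‖
      ≤ Real.sqrt (Fintype.card (Fin N × Fin 3)) * (C * Real.exp (-(μ * t))) :=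
    mul_le_mul_of_nonneg_left (hbound t ht) (Real.sqrt_nonneg _)
  refine le_trans h2 ?_
  rw [neg_mul]
  have h3 := Real.exp_pos (-(μ * t))
  nlinarith [Real.sqrt_nonneg ((Fintype.card (Fin N × Fin 3)) : ℝ)]
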